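/- Let K be the attractor of an IFS {f_i}_{i=1}^m on ℂ with f_i(z) = a_i z + b_i, a_i, b_i ∈ ℂ, 0 < |a_i| < 1, and suppose K is not a singleton. If an eventually periodic word i₁…i_l(j₁…j_k)^∞ ∈ {1,…,m}^ℕ is a coding of an extreme point of the convex hull of K, then the product a_{j₁}a_{j₂}⋯a_{j_k} is a positive real number. -/

import Mathlib

open Real Set


lemma pow_re_aux (P : ℂ) (him : 0 < P.im) : ∃ j : ℕ, 1 ≤ j ∧ (P^j).re ≤ 0 := by
  have hP : P ≠ 0 := by intro h; simp [h] at him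
  set θ := Complex.arg P with hθ
  have hθ0 : 0 < θ := by
    rcases lt_or_eq_of_le (Complex.arg_nonneg_iff.2 him.le) with h | h
    · exact h
    · exfalso
      have := (Complex.arg_eq_zero_iff.1 h.symm).2
      exact him.ne' this
  have hθpi : θ < π := Complex.arg_lt_pi_iff.2 (Or.inr him.ne')
  -- find j ≥ 1 with π/2 ≤ jθ ≤ π
  obtain ⟨j, hj1, hj2, hj3⟩ : ∃ j : ℕ, 1 ≤ j ∧ π/2 ≤ j * θ ∧ (j:ℝ) * θ ≤ π := by
    by_cases hhalf : π/2 ≤ θ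
    · exact ⟨1, le_refl _, by simpa using hhalf, by simpa using hθpi.le⟩
    · push_neg at hhalf
      refine ⟨⌈π/(2*θ)⌉₊, ?_, ?_, ?_⟩
      · have : (1:ℝ) ≤ π/(2*θ) := by
          rw [le_div_iff₀ (by linarith)]
          linarith
        exact_mod_cast Nat.one_le_ceil_iff.2 (by positivity)
      · have h1 : π/(2*θ) ≤ (⌈π/(2*θ)⌉₊ : ℝ) := Nat.le_ceil _
        calc π/2 = (π/(2*θ)) * θ := by field_simp
          _ ≤ _ := by nlinarith [sq_nonneg θ]
      · have h2 : (⌈π/(2*θ)⌉₊ : ℝ) < π/(2*θ) + 1 := Nat.ceil_lt_add_one (by positivity)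
        have : (⌈π/(2*θ)⌉₊ : ℝ) * θ < (π/(2*θ) + 1) * θ := by nlinarith
        have h3 : (π/(2*θ) + 1) * θ = π/2 + θ := by field_simp
        nlinarith [pi_pos]
  refine ⟨j, hj1, ?_⟩
  have hform : P ^ j = (‖P‖ ^ j : ℝ) * Complex.exp ((j * θ : ℝ) * Complex.I) := by
    conv_lhs => rw [← Complex.norm_mul_exp_arg_mul_I P]
    rw [mul_pow, ← Complex.exp_nat_mul]
    push_cast [hθ]
    ring_nf
  rw [hform]
  have : (Complex.exp ((j * θ : ℝ) * Complex.I)).re = Real.cos (j * θ) :=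
    Complex.exp_ofReal_mul_I_re _
  rw [Complex.re_ofReal_mul, this]
  have hcos : Real.cos (j * θ) ≤ 0 :=
    Real.cos_nonpos_of_pi_div_two_le_of_le hj2 (by linarith [pi_pos])
  have : (0:ℝ) ≤ ‖P‖ ^ j := by positivity
  exact mul_nonpos_of_nonneg_of_nonpos this hcos


lemma pow_re_nonpos (P : ℂ) (hP : P ≠ 0) (h : ¬ ∃ r : ℝ, 0 < r ∧ P = r) :
    ∃ j : ℕ, 1 ≤ j ∧ (P^j).re ≤ 0 := by
  rcases lt_trichotomy P.im 0 with him | him | him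
  · obtain ⟨j, hj1, hj2⟩ := pow_re_aux (starRingEnd ℂ P) (by simpa using him)
    refine ⟨j, hj1, ?_⟩
    rwa [← map_pow, Complex.conj_re] at hj2
  · refine ⟨1, le_refl _, ?_⟩
    simp only [pow_one]
    by_contra hre
    push_neg at hre
    refine h ⟨P.re, hre, ?_⟩
    exact (Complex.ext (by simp) (by simp [him])).symm
  · exact pow_re_aux P him

lemma key_ext (K : Set ℂ) (z q : ℂ) (hqz : q ≠ z) (P : ℂ) (hP : P ≠ 0)
    (horb : ∀ n : ℕ, z + P ^ n * (q - z) ∈ K)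
    (hext : z ∈ Set.extremePoints ℝ (convexHull ℝ K)) :
    ∃ r : ℝ, 0 < r ∧ P = r := by
  by_contra h
  obtain ⟨j, hj1, hj2⟩ := pow_re_nonpos P hP h
  set Q : ℂ := P ^ j with hQ
  have hQ0 : Q ≠ 0 := pow_ne_zero _ hP
  set c0 : ℝ := Complex.normSq Q with hc0
  set c1 : ℝ := -2 * Q.re with hc1
  have hc0pos : 0 < c0 := Complex.normSq_pos.2 hQ0
  have hc1nn : 0 ≤ c1 := by simp only [hc1]; linarith
  have hquad : (c0 : ℂ) + (c1 : ℂ) * Q + Q ^ 2 = 0 := by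
    simp only [hc0, hc1]
    rw [Complex.ext_iff]
    constructor <;>
      simp [Complex.normSq_apply, pow_two, Complex.mul_re, Complex.mul_im] <;> ring
  set v : ℂ := q - z with hv
  have hvne : v ≠ 0 := sub_ne_zero.2 hqz
  have hA : z + v ∈ K := by simpa using horb 0
  have hB : z + Q * v ∈ K := by simpa [hQ] using horb j
  have hC : z + Q ^ 2 * v ∈ K := by
    have := horb (j * 2)
    rwa [pow_mul] at this
  have hKhull : K ⊆ convexHull ℝ K := subset_convexHull ℝ K
  set T1 : ℝ := c1 + 1 with hT1
  have hT1pos : 0 < T1 := by linarith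
  set D : ℂ := (c1 / T1) • (z + Q * v) + ((1:ℝ) / T1) • (z + Q ^ 2 * v) with hD
  have hDmem : D ∈ convexHull ℝ K :=
    (convex_convexHull ℝ K) (hKhull hB) (hKhull hC)
      (by positivity) (by positivity) (by field_simp; exact hT1.symm)
  set T : ℝ := c0 + T1 with hT
  have hTpos : 0 < T := by linarith
  have hT1ne : ((T1:ℝ):ℂ) ≠ 0 := by exact_mod_cast hT1pos.ne'
  have hTne : ((T:ℝ):ℂ) ≠ 0 := by exact_mod_cast hTpos.ne'
  have hTc : ((T:ℝ):ℂ) = (c0:ℂ) + (c1:ℂ) + 1 := by push_cast [hT, hT1]; ring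
  have hT1c : ((T1:ℝ):ℂ) = (c1:ℂ) + 1 := by push_cast [hT1]; ring
  have hsum : c0 / T + c1 / T + 1 / T = 1 := by
    rw [← add_div, ← add_div, div_eq_one_iff_eq hTpos.ne', hT, hT1]; ring
  have hsumC : (c0:ℂ) / T + (c1:ℂ) / T + 1 / (T:ℂ) = 1 := by exact_mod_cast hsum
  have hdiv1 : ((T1:ℝ):ℂ) / T * ((c1:ℝ) / T1) = (c1:ℂ) / T := by field_simp
  have hdiv2 : ((T1:ℝ):ℂ) / T * (1 / (T1:ℂ)) = 1 / (T:ℂ) := by field_simp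
  have hseg : z ∈ openSegment ℝ (z + v) D := by
    refine ⟨c0 / T, T1 / T, by positivity, by positivity, by field_simp; exact hT.symm, ?_⟩
    rw [hD]
    simp only [Complex.real_smul]
    push_cast
    linear_combination (z + Q*v) * hdiv1 + (z + Q^2*v) * hdiv2 + z * hsumC + (v/(T:ℂ)) * hquad
  have := hext.2 (hKhull hA) hDmem hseg
  exact hvne (by simpa using congrArg (· - z) this)


theorem stmt3 (m : ℕ) (hm : 0 < m) (a b : Fin m → ℂ)
    (ha : ∀ i, 0 < ‖a i‖ ∧ ‖a i‖ < 1)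
    (f : Fin m → ℂ → ℂ) (hf : ∀ i z, f i z = a i * z + b i)
    (K : Set ℂ) (hKne : K.Nonempty) (hKc : IsCompact K)
    (hK : K = ⋃ i, f i '' K)
    (hns : ∃ x ∈ K, ∃ y ∈ K, x ≠ y)
    -- an eventually periodic word w = i₁…i_l (j₁…j_k)^∞
    (w : ℕ → Fin m) (l k : ℕ) (hk : 0 < k)
    (hper : ∀ n, l ≤ n → w (n + k) = w n)
    -- F n is the composition f_{w 0} ∘ f_{w 1} ∘ ⋯ ∘ f_{w (n-1)}
    (F : ℕ → ℂ → ℂ) (hF0 : F 0 = id) (hFs : ∀ n, F (n + 1) = F n ∘ f (w n))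
    -- w is a coding of the point z
    (z : ℂ) (hz : (⋂ n : ℕ, F (n + 1) '' K) = {z})
    -- z is an extreme point of the convex hull of K
    (hext : z ∈ Set.extremePoints ℝ (convexHull ℝ K)) :
    ∃ r : ℝ, 0 < r ∧ (∏ i ∈ Finset.range k, a (w (l + i))) = (r : ℂ) := by
  -- basic facts
  have hane : ∀ i, a i ≠ 0 := by
    intro i h
    have := (ha i).1
    simp [h] at this
  set P : ℂ := ∏ i ∈ Finset.range k, a (w (l + i)) with hPdef
  have hP : P ≠ 0 := Finset.prod_ne_zero_iff.2 fun i _ => hane _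
  -- periodicity
  have wper : ∀ n i, w (l + n * k + i) = w (l + i) := by
    intro n
    induction n with
    | zero => intro i; rw [show l + 0 * k + i = l + i by omega]
    | succ n ih =>
      intro i
      rw [show l + (n + 1) * k + i = (l + n * k + i) + k by ring,
        hper _ (by omega), ih]
  -- the inner block composition
  let g : ℕ → ℂ → ℂ := fun j => Nat.rec id (fun j' gj => gj ∘ f (w (l + j'))) j
  have hg0 : g 0 = id := rfl
  have hgs : ∀ j, g (j + 1) = g j ∘ f (w (l + j)) := fun j => rfl
  set G : ℂ → ℂ := g k with hGdef
  -- F (l + n*k + j) = F (l + n*k) ∘ g j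
  have hFg : ∀ n j, F (l + n * k + j) = F (l + n * k) ∘ g j := by
    intro n j
    induction j with
    | zero => rfl
    | succ j ih =>
      rw [show l + n * k + (j + 1) = (l + n * k + j) + 1 from rfl, hFs, ih,
        hgs, show w (l + n * k + j) = w (l + j) from wper n j]
      rfl
  have hFG : ∀ n, F (l + (n + 1) * k) = F (l + n * k) ∘ G := by
    intro n
    rw [show l + (n + 1) * k = l + n * k + k by ring]
    exact hFg n k
  have hiter : ∀ n, F (l + n * k) = F l ∘ G^[n] := by
    intro n
    induction n with
    | zero => simp
    | succ n ih =>
      rw [hFG, ih, Function.iterate_succ]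
      rfl
  -- affine form of g j
  have hgaff : ∀ j, ∃ c, ∀ x, g j x = (∏ i ∈ Finset.range j, a (w (l + i))) * x + c := by
    intro j
    induction j with
    | zero => exact ⟨0, fun x => by simp [hg0]⟩
    | succ j ih =>
      obtain ⟨c, hc⟩ := ih
      refine ⟨(∏ i ∈ Finset.range j, a (w (l + i))) * b (w (l + j)) + c, fun x => ?_⟩
      rw [hgs, Function.comp_apply, hf, hc, Finset.prod_range_succ]
      ring
  obtain ⟨cG, hG⟩ : ∃ c, ∀ x, G x = P * x + c := hgaff k
  -- affine form of F n
  have haff : ∀ n, ∃ A B : ℂ, A ≠ 0 ∧ ∀ x, F n x = A * x + B := by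
    intro n
    induction n with
    | zero => exact ⟨1, 0, one_ne_zero, fun x => by simp [hF0]⟩
    | succ n ih =>
      obtain ⟨A, B, hA, hAB⟩ := ih
      exact ⟨A * a (w n), A * b (w n) + B, mul_ne_zero hA (hane _), fun x => by
        rw [hFs, Function.comp_apply, hf, hAB]; ring⟩
  obtain ⟨Al, Bl, hAl, hFl⟩ := haff l
  obtain ⟨Ak, Bk, hAk, hFk⟩ := haff (l + k)
  -- Phi
  set FlInv : ℂ → ℂ := fun x => (x - Bl) / Al with hFlInv
  have hinv : ∀ x, FlInv (F l x) = x := by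
    intro x; show (F l x - Bl) / Al = x; rw [hFl]; field_simp; ring
  set Φ : ℂ → ℂ := F l ∘ G ∘ FlInv with hΦdef
  have hΦF : ∀ n x, Φ (F (l + n * k) x) = F (l + (n + 1) * k) x := by
    intro n x
    rw [hiter n, hiter (n + 1)]
    simp only [hΦdef, Function.comp_apply]
    rw [hinv, Function.iterate_succ_apply']
  -- monotonicity of images
  have hsubK : ∀ i : Fin m, f i '' K ⊆ K := by
    intro i
    conv_rhs => rw [hK]
    exact subset_iUnion_of_subset i (subset_refl _)
  have hdec : ∀ n, F (n + 1) '' K ⊆ F n '' K := by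
    intro n
    rw [hFs, image_comp]
    exact image_mono (hsubK _)
  have hdec' : ∀ n n', n ≤ n' → F n' '' K ⊆ F n '' K := by
    intro n n' h
    induction n' with
    | zero => rw [Nat.le_zero.1 h]
    | succ n' ih =>
      rcases Nat.lt_or_ge n (n' + 1) with h' | h'
      · exact (hdec n').trans (ih (by omega))
      · rw [Nat.le_antisymm h h']
  have hKsub : ∀ n, F n '' K ⊆ K := by
    intro n
    have := hdec' 0 n (Nat.zero_le _)
    rwa [hF0, image_id] at this
  -- z in all the images
  have hzm : ∀ n, z ∈ F (n + 1) '' K := by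
    intro n
    have : z ∈ ⋂ n : ℕ, F (n + 1) '' K := by rw [hz]; exact mem_singleton _
    exact mem_iInter.1 this n
  have hzm' : ∀ n, 1 ≤ n → z ∈ F n '' K := by
    intro n hn
    obtain ⟨n', rfl⟩ : ∃ n', n = n' + 1 := ⟨n - 1, by omega⟩
    exact hzm n'
  -- Φ fixes z
  have hΦz : Φ z = z := by
    have hmem : ∀ M : ℕ, Φ z ∈ F (M + 1) '' K := by
      intro M
      obtain ⟨x, hx, hxz⟩ := hzm' (l + (M + 1) * k) (by nlinarith)
      have : Φ z = F (l + (M + 2) * k) x := by rw [← hxz, hΦF (M + 1)]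
      rw [this]
      exact hdec' (M + 1) (l + (M + 2) * k) (by nlinarith) (mem_image_of_mem _ hx)
    have : Φ z ∈ ⋂ n : ℕ, F (n + 1) '' K := mem_iInter.2 hmem
    rwa [hz, mem_singleton_iff] at this
  -- affine difference form of Φ
  have hΦdiff : ∀ x y, Φ x - Φ y = P * (x - y) := by
    intro x y
    simp only [hΦdef, Function.comp_apply, hFlInv]
    rw [hFl, hFl, hG, hG]
    field_simp
    ring
  have hΦform : ∀ n x, Φ^[n] x = P ^ n * (x - z) + z := by
    intro n
    induction n with
    | zero => intro x; simp
    | succ n ih =>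
      intro x
      rw [Function.iterate_succ_apply', ih]
      have := hΦdiff (P ^ n * (x - z) + z) z
      rw [hΦz] at this
      rw [sub_eq_iff_eq_add] at this
      rw [this]
      ring
  -- orbit of q
  have hΦFk : ∀ n x, Φ^[n] (F (l + k) x) = F (l + (n + 1) * k) x := by
    intro n
    induction n with
    | zero =>
      intro x
      rw [Function.iterate_zero_apply, show l + 1 * k = l + k by ring]
    | succ n ih =>
      intro x
      rw [Function.iterate_succ_apply', ih, hΦF (n + 1)]
  -- choose q
  obtain ⟨x0, hx0, y0, hy0, hxy⟩ := hns
  have hFkinj : F (l + k) x0 ≠ F (l + k) y0 := by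
    rw [hFk, hFk]
    intro h
    exact hxy (by
      exact mul_left_cancel₀ hAk (add_right_cancel h))
  obtain ⟨x1, hx1, hq⟩ : ∃ x1, x1 ∈ K ∧ F (l + k) x1 ≠ z := by
    rcases eq_or_ne (F (l + k) x0) z with h | h
    · exact ⟨y0, hy0, by rw [← h]; exact hFkinj.symm⟩
    · exact ⟨x0, hx0, h⟩
  set q : ℂ := F (l + k) x1 with hqdef
  have horb : ∀ n : ℕ, z + P ^ n * (q - z) ∈ K := by
    intro n
    have h1 : Φ^[n] q = F (l + (n + 1) * k) x1 := hΦFk n x1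
    have h2 : Φ^[n] q = P ^ n * (q - z) + z := hΦform n q
    have : z + P ^ n * (q - z) = F (l + (n + 1) * k) x1 := by
      rw [← h1, h2]; ring
    rw [this]
    exact hKsub _ (mem_image_of_mem _ hx1)
  exact key_ext K z q hq P hP horb hext
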